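/- Let D be the discriminant of a real quadratic field K = Q(√d) with d squarefree and positive, and let κ(D) denote the caliber number of K, i.e., the number of reduced primitive binary quadratic forms of discriminant D. Then Σ_{A < √D/2} ρ_D(A) ≤ κ(D) ≤ Σ_{A < √D} ρ_D(A), where ρ_D(A) = #{ [B] ∈ Z/2AZ : B² ≡ D (mod 4A) }. -/

import Mathlib

noncomputable section

/-- The binary quadratic form `[A,B,C]` is reduced of discriminant `D`. -/
def IsReducedForm (D A B C : ℤ) : Prop :=
  D = B ^ 2 - 4 * A * C ∧ 0 < A ∧ B < 0 ∧ C < 0 ∧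
    ((|B| : ℤ) : ℝ) < Real.sqrt D ∧
    Real.sqrt D - ((|B| : ℤ) : ℝ) < 2 * (A : ℝ) ∧
    2 * (A : ℝ) < Real.sqrt D + ((|B| : ℤ) : ℝ)

/-- The form `[A,B,C]` is primitive. -/
def IsPrimitiveForm (A B C : ℤ) : Prop := Int.gcd A (Int.gcd B C) = 1

/-- The caliber number: the number of reduced primitive forms of discriminant `D`. -/
def caliber (D : ℤ) : ℕ :=
  Nat.card {f : ℤ × ℤ × ℤ //
    IsReducedForm D f.1 f.2.1 f.2.2 ∧ IsPrimitiveForm f.1 f.2.1 f.2.2}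

/-- `rho D A` is the number of classes `[B] ∈ ℤ/2Aℤ` with `B ^ 2 ≡ D (mod 4A)`. -/
def rho (D : ℤ) (A : ℕ) : ℕ :=
  Nat.card {B : ZMod (2 * A) //
    ∃ b : ℤ, (b : ZMod (2 * A)) = B ∧ (4 * (A : ℤ)) ∣ b ^ 2 - D}

/-- The discriminant of the real quadratic field `ℚ(√d)` for `d` squarefree. -/
def disc (d : ℕ) : ℤ := if d % 4 = 1 then (d : ℤ) else 4 * d

/-- The Kronecker symbol `(D / p)` for a prime `p` (via the Jacobi symbol for odd `p`). -/
def kronecker (D : ℤ) (p : ℕ) : ℤ :=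
  if p = 2 then (if D % 8 = 1 then 1 else if D % 8 = 5 then -1 else 0)
  else jacobiSym D p

end


lemma disc_pos (d : ℕ) (h1 : 1 < d) : 0 < disc d := by
  unfold disc; split <;> positivity

lemma not_sq (d : ℕ) (hd : Squarefree d) (h1 : 1 < d) : ¬ IsSquare d := by
  intro ⟨k, hk⟩
  have hk2 : k * k ∣ d := by rw [hk]
  have h := Nat.isUnit_iff.mp (hd k hk2)
  rw [h] at hk; omega

lemma disc_irr (d : ℕ) (hd : Squarefree d) (h1 : 1 < d) : Irrational (Real.sqrt (disc d)) := by
  have hds : ¬ IsSquare (d : ℤ) := by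
    rw [Int.isSquare_natCast_iff]; exact not_sq d hd h1
  have h4 : ¬ IsSquare ((4 * d : ℕ) : ℤ) := by
    rw [Int.isSquare_natCast_iff]
    intro ⟨k, hk⟩
    rcases Nat.even_or_odd k with ⟨m, hm⟩ | hodd
    · refine not_sq d hd h1 ⟨m, ?_⟩
      have : 4 * (m * m) = 4 * d := by rw [hk, hm]; ring
      omega
    · have : Odd (k * k) := hodd.mul hodd
      rw [← hk] at this
      exact (Nat.not_odd_iff_even.mpr ⟨2*d, by ring⟩) this
  unfold disc
  split
  · exact (irrational_sqrt_intCast_iff).mpr ⟨hds, by positivity⟩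
  · have : ((4 * (d:ℤ) : ℤ) : ℝ) = (((4*d : ℕ) : ℤ) : ℝ) := by push_cast; ring
    rw [this]
    exact (irrational_sqrt_intCast_iff).mpr ⟨h4, by positivity⟩

lemma sqmod4 : ∀ x : ZMod 4, x^2 ≠ 2 ∧ x^2 ≠ 3 := by decide

lemma prim_of_disc (d : ℕ) (hd : Squarefree d) (h1 : 1 < d) (A B C : ℤ) (hA : A ≠ 0)
    (hD : disc d = B ^ 2 - 4 * A * C) : IsPrimitiveForm A B C := by
  by_contra hne
  have hg0 : Int.gcd A (Int.gcd B C) ≠ 0 := by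
    intro h0
    exact hA (Int.gcd_eq_zero_iff.mp h0).1
  obtain ⟨p, hp, hpg⟩ := Nat.exists_prime_and_dvd hne
  have hpA : (p : ℤ) ∣ A := dvd_trans (Int.natCast_dvd_natCast.mpr hpg) (Int.gcd_dvd_left _ _)
  have hpB : (p : ℤ) ∣ B := dvd_trans (Int.natCast_dvd_natCast.mpr hpg)
    (dvd_trans (Int.gcd_dvd_right _ _) (Int.gcd_dvd_left _ _))
  have hpC : (p : ℤ) ∣ C := dvd_trans (Int.natCast_dvd_natCast.mpr hpg)
    (dvd_trans (Int.gcd_dvd_right _ _) (Int.gcd_dvd_right _ _))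
  obtain ⟨a, ha⟩ := hpA; obtain ⟨b, hb⟩ := hpB; obtain ⟨c, hc⟩ := hpC
  have hp2 : (p:ℤ)^2 ∣ disc d := ⟨b^2 - 4*a*c, by rw [hD, ha, hb, hc]; ring⟩
  by_cases h4 : d % 4 = 1
  · have hz : (p:ℤ)*(p:ℤ) ∣ (d:ℤ) := by
      rw [← pow_two]; rwa [disc, if_pos h4] at hp2
    have : p * p ∣ d := by exact_mod_cast hz
    exact hp.not_isUnit (hd p this)
  · have hdisc : disc d = 4 * d := by rw [disc, if_neg h4]
    have hp2' : (p:ℤ)*(p:ℤ) ∣ 4 * d := by rw [← pow_two]; exact hdisc ▸ hp2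
    by_cases hp2eq : p = 2
    · subst hp2eq
      have hd4 : ¬ (4 ∣ d) := fun hdvd => hp.not_isUnit (hd 2 (by omega))
      have hkey : (d:ℤ) = b^2 - 4*(a*c) := by
        have : (4:ℤ) * d = 4*b^2 - 4*(4*(a*c)) := by
          rw [← hdisc, hD, ha, hb, hc]; push_cast; ring
        linarith
      have hzm : ((d:ℕ) : ZMod 4) = (b : ZMod 4)^2 := by
        have h := congrArg (Int.cast : ℤ → ZMod 4) hkey
        push_cast at h
        rw [h]
        simp [show ((4:ℤ) : ZMod 4) = 0 from by decide]
        ring_nf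
        simp [show (4 : ZMod 4) = 0 from by decide]
      have hmod : ((d : ℕ) : ZMod 4) = ((d % 4 : ℕ) : ZMod 4) := (ZMod.natCast_mod d 4).symm
      have hd23 : d % 4 = 2 ∨ d % 4 = 3 := by omega
      rw [hmod] at hzm
      rcases hd23 with h | h <;> rw [h] at hzm
      · exact (sqmod4 (b : ZMod 4)).1 (by rw [← hzm]; decide)
      · exact (sqmod4 (b : ZMod 4)).2 (by rw [← hzm]; decide)
    · have hpodd : Nat.Coprime (p*p) 4 := by
        have h2 : Nat.Coprime p 2 := (Nat.coprime_primes hp Nat.prime_two).mpr hp2eq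
        have : Nat.Coprime (p*p) 2 := Nat.Coprime.mul h2 h2
        simpa using Nat.Coprime.mul_right this this
      have hn : p*p ∣ 4 * d := by exact_mod_cast hp2'
      have : p*p ∣ d := (Nat.Coprime.dvd_of_dvd_mul_left hpodd hn)
      exact hp.not_isUnit (hd p this)

section Aux

open Real

lemma exists_rep (x : ℝ) (hx : Irrational x) (m : ℤ) (hm : 0 < m) (b : ℤ) :
    ∃ B : ℤ, m ∣ (B - b) ∧ x < B ∧ (B : ℝ) < x + m := by
  refine ⟨b + m * ⌈(x - b) / m⌉, ⟨⌈(x - b) / m⌉, by ring⟩, ?_, ?_⟩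
  · have h1 : (x - b) / m ≤ ⌈(x - b) / m⌉ := Int.le_ceil _
    have hm' : (0:ℝ) < m := by exact_mod_cast hm
    have h2 : x - b ≤ m * ⌈(x - b) / m⌉ := by
      rw [div_le_iff₀ hm'] at h1; linarith [h1]
    have hne : x ≠ ((b + m * ⌈(x - b) / m⌉ : ℤ) : ℝ) := hx.ne_int _
    push_cast at hne ⊢
    rcases lt_or_eq_of_le (by linarith : x ≤ (b:ℝ) + m * ⌈(x - b) / m⌉) with h | h
    · exact h
    · exact absurd (by linarith) hne
  · have h1 : (⌈(x - b) / m⌉ : ℝ) < (x - b) / m + 1 := Int.ceil_lt_add_one _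
    have hm' : (0:ℝ) < m := by exact_mod_cast hm
    have : (m:ℝ) * ⌈(x - b) / m⌉ < m * ((x - b)/m + 1) := by
      exact mul_lt_mul_of_pos_left h1 hm'
    rw [mul_add, mul_div_cancel₀ _ (ne_of_gt hm')] at this
    push_cast
    linarith

lemma eq_of_dvd_of_abs_lt {B B' m : ℤ} (h : m ∣ B - B') (habs : |B - B'| < m) : B = B' := by
  rcases eq_or_ne (B - B') 0 with h0 | h0
  · omega
  · have := Int.le_of_dvd (abs_pos.mpr h0) ((dvd_abs m (B - B')).mpr h)
    omega

lemma cong_sq {B b A : ℤ} (h : 2 * A ∣ B - b) : 4 * A ∣ B ^ 2 - b ^ 2 := by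
  obtain ⟨k, hk⟩ := h
  have hB : B = b + 2 * A * k := by linarith
  exact ⟨b * k + A * k ^ 2, by rw [hB]; ring⟩

lemma sqrtD_le_D (D : ℤ) (hD0 : 0 < D) : Real.sqrt D ≤ (D : ℝ) := by
  have h1 : (1:ℝ) ≤ D := by exact_mod_cast hD0
  nlinarith [Real.sq_sqrt (by positivity : (0:ℝ) ≤ (D:ℝ)), Real.sqrt_nonneg (D:ℝ)]

/-- finiteness of the set of reduced primitive forms -/
lemma finite_S (D : ℤ) (hD0 : 0 < D) : Finite {f : ℤ × ℤ × ℤ //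
    IsReducedForm D f.1 f.2.1 f.2.2 ∧ IsPrimitiveForm f.1 f.2.1 f.2.2} := by
  have hsub : {f : ℤ × ℤ × ℤ | IsReducedForm D f.1 f.2.1 f.2.2 ∧ IsPrimitiveForm f.1 f.2.1 f.2.2}
      ⊆ ↑(Finset.Icc ((1 : ℤ), (-D : ℤ), (-D : ℤ)) ((D : ℤ), (0:ℤ), (0:ℤ))) := by
    rintro ⟨A, B, C⟩ ⟨⟨hDeq, hA, hB, hC, h1, h2, h3⟩, -⟩
    have hs := sqrtD_le_D D hD0
    have habs : ((|B| : ℤ) : ℝ) = -(B : ℝ) := by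
      rw [abs_of_neg hB]; push_cast; ring
    rw [habs] at h1 h2 h3
    have hBr : -(D:ℝ) ≤ (B:ℝ) := by linarith
    have hAr : (A:ℝ) ≤ (D:ℝ) := by linarith
    have hBi : -D ≤ B := by exact_mod_cast hBr
    have hAi : A ≤ D := by exact_mod_cast hAr
    have hCi : -D ≤ C := by nlinarith [hDeq, hA, hC]
    simp only [Finset.coe_Icc, Set.mem_Icc, Prod.le_def]
    exact ⟨⟨hA, hBi, hCi⟩, hAi, hB.le, hC.le⟩
  have := Set.Finite.subset (Finset.Icc _ _).finite_toSet hsub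
  exact this

end Aux

section Main

lemma sum_rho_eq (D : ℤ) (s : Finset ℕ) (hs : ∀ A ∈ s, 1 ≤ A) :
    ∑ A ∈ s, rho D A = Nat.card (Σ a : {x // x ∈ s},
      {B : ZMod (2 * a.1) // ∃ b : ℤ, (b : ZMod (2 * a.1)) = B ∧ (4 * (a.1 : ℤ)) ∣ b ^ 2 - D}) := by
  classical
  haveI I : ∀ a : {x // x ∈ s}, Fintype {B : ZMod (2 * a.1) //
      ∃ b : ℤ, (b : ZMod (2 * a.1)) = B ∧ (4 * (a.1 : ℤ)) ∣ b ^ 2 - D} := by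
    intro a
    haveI : NeZero (2 * a.1) := ⟨by have := hs a.1 a.2; omega⟩
    exact Subtype.fintype _
  rw [Nat.card_eq_fintype_card, Fintype.card_sigma, ← Finset.sum_coe_sort s (fun A => rho D A)]
  exact Finset.sum_congr rfl (fun a _ => Nat.card_eq_fintype_card)

lemma caliber_le_sum (D : ℤ) (hD0 : 0 < D) (hirr : Irrational (Real.sqrt D)) :
    caliber D ≤ ∑ A ∈ (Finset.Icc 1 D.toNat).filter
      (fun A : ℕ => (A : ℝ) < Real.sqrt D), rho D A := by
  classical
  set s := (Finset.Icc 1 D.toNat).filter (fun A : ℕ => (A : ℝ) < Real.sqrt D) with hsdef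
  have hs1 : ∀ A ∈ s, 1 ≤ A := by
    intro A hA
    rw [hsdef, Finset.mem_filter, Finset.mem_Icc] at hA
    exact hA.1.1
  rw [sum_rho_eq D s hs1]
  haveI I : ∀ a : {x // x ∈ s}, Fintype {B : ZMod (2 * a.1) //
      ∃ b : ℤ, (b : ZMod (2 * a.1)) = B ∧ (4 * (a.1 : ℤ)) ∣ b ^ 2 - D} := by
    intro a
    haveI : NeZero (2 * a.1) := ⟨by have := hs1 a.1 a.2; omega⟩
    exact Subtype.fintype _
  -- helper facts
  have hmem : ∀ f : {f : ℤ × ℤ × ℤ //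
      IsReducedForm D f.1 f.2.1 f.2.2 ∧ IsPrimitiveForm f.1 f.2.1 f.2.2}, f.1.1.toNat ∈ s := by
    rintro ⟨⟨A, B, C⟩, ⟨hDeq, hA, hB, hBabs0, h1, h2, h3⟩, -⟩
    simp only
    have habs : ((|B| : ℤ) : ℝ) = -(B : ℝ) := by rw [abs_of_neg hB]; push_cast; ring
    rw [habs] at h1 h3
    have hAsqr : (A : ℝ) < Real.sqrt D := by linarith
    have hAD : (A : ℝ) < (D : ℝ) := lt_of_lt_of_le hAsqr (sqrtD_le_D D hD0)
    have hAiD : A ≤ D := by exact_mod_cast hAD.le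
    have hcast : ((A.toNat : ℕ) : ℝ) = (A : ℝ) := by
      have : ((A.toNat : ℤ)) = A := Int.toNat_of_nonneg hA.le
      exact_mod_cast congrArg (Int.cast : ℤ → ℝ) this
    rw [hsdef, Finset.mem_filter, Finset.mem_Icc]
    refine ⟨⟨by omega, by omega⟩, by rw [hcast]; exact hAsqr⟩
  have hdvd : ∀ f : {f : ℤ × ℤ × ℤ //
      IsReducedForm D f.1 f.2.1 f.2.2 ∧ IsPrimitiveForm f.1 f.2.1 f.2.2},
      (4 * (f.1.1.toNat : ℤ)) ∣ f.1.2.1 ^ 2 - D := by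
    rintro ⟨⟨A, B, C⟩, ⟨hDeq, hA, _⟩, -⟩
    simp only
    have hAN : ((A.toNat : ℤ)) = A := Int.toNat_of_nonneg hA.le
    exact ⟨C, by rw [hAN]; linarith⟩
  set Φ : {f : ℤ × ℤ × ℤ //
      IsReducedForm D f.1 f.2.1 f.2.2 ∧ IsPrimitiveForm f.1 f.2.1 f.2.2} →
      (Σ a : {x // x ∈ s}, {B : ZMod (2 * a.1) //
        ∃ b : ℤ, (b : ZMod (2 * a.1)) = B ∧ (4 * (a.1 : ℤ)) ∣ b ^ 2 - D}) :=
    fun f => ⟨⟨f.1.1.toNat, hmem f⟩,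
      ⟨((f.1.2.1 : ℤ) : ZMod (2 * f.1.1.toNat)), f.1.2.1, rfl, hdvd f⟩⟩ with hΦdef
  refine Nat.card_le_card_of_injective Φ ?_
  intro f g h
  obtain ⟨⟨A, B, C⟩, hfr, hfp⟩ := f
  obtain ⟨⟨A', B', C'⟩, hgr, hgp⟩ := g
  have h1 : A.toNat = A'.toNat := congrArg (fun p => (Sigma.fst p).1) h
  have hA : A = A' := by
    have := hfr.2.1; have := hgr.2.1; omega
  subst hA
  have h2 : ((B : ℤ) : ZMod (2 * A.toNat)) = ((B' : ℤ) : ZMod (2 * A.toNat)) := by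
    have := (Sigma.ext_iff.mp h).2
    exact congrArg Subtype.val (eq_of_heq this)
  have hmod : ((2 * A.toNat : ℕ) : ℤ) ∣ B - B' := by
    have := (ZMod.intCast_eq_intCast_iff _ _ _).mp h2
    exact (dvd_sub_comm).mp this.dvd
  have hAN : ((A.toNat : ℤ)) = A := Int.toNat_of_nonneg hfr.2.1.le
  have hmod2 : (2 * A) ∣ B - B' := by
    have : ((2 * A.toNat : ℕ) : ℤ) = 2 * A := by push_cast; rw [hAN]
    rwa [this] at hmod
  obtain ⟨hDeq, hA0, hB, hC, hf1, hf2, hf3⟩ := hfr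
  obtain ⟨hDeq', hA0', hB', hC', hg1, hg2, hg3⟩ := hgr
  have habs : ((|B| : ℤ) : ℝ) = -(B : ℝ) := by rw [abs_of_neg hB]; push_cast; ring
  have habs' : ((|B'| : ℤ) : ℝ) = -(B' : ℝ) := by rw [abs_of_neg hB']; push_cast; ring
  rw [habs] at hf1 hf2 hf3
  rw [habs'] at hg1 hg2 hg3
  have hreal : |(B : ℝ) - (B' : ℝ)| < 2 * (A : ℝ) := by
    rw [abs_lt]; constructor <;> linarith
  have hint : |B - B'| < 2 * A := by
    have : ((|B - B'| : ℤ) : ℝ) < ((2 * A : ℤ) : ℝ) := by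
      push_cast
      exact hreal
    exact_mod_cast this
  have hBB : B = B' := eq_of_dvd_of_abs_lt hmod2 hint
  subst hBB
  have hCC : C = C' := by
    have h4 : 4 * A * C = 4 * A * C' := by linarith
    have hA4 : (4 * A : ℤ) ≠ 0 := by positivity
    exact mul_left_cancel₀ hA4 h4
  subst hCC
  rfl

end Main

section Lower

lemma build_form (D : ℤ) (hD0 : 0 < D) (hirr : Irrational (Real.sqrt D))
    (hprim : ∀ A B C : ℤ, A ≠ 0 → D = B ^ 2 - 4 * A * C → IsPrimitiveForm A B C)
    (A : ℕ) (hA1 : 1 ≤ A) (hAlt : (A : ℝ) < Real.sqrt D / 2)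
    (b : ℤ) (hb : (4 * (A : ℤ)) ∣ b ^ 2 - D) :
    ∃ B C : ℤ, (IsReducedForm D A B C ∧ IsPrimitiveForm A B C) ∧ (2 * (A : ℤ)) ∣ (B - b) := by
  have hA0 : (0 : ℤ) < 2 * A := by positivity
  obtain ⟨B, hcong, hlo, hhi⟩ := exists_rep (-(Real.sqrt D)) hirr.neg (2 * A) hA0 b
  have hsq : Real.sqrt D * Real.sqrt D = D := Real.mul_self_sqrt (by positivity)
  have h2A : 2 * (A : ℝ) < Real.sqrt D := by linarith
  have hhir : (B : ℝ) < -(Real.sqrt D) + 2 * (A : ℝ) := by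
    have : (((2 * A : ℤ)) : ℝ) = 2 * (A : ℝ) := by push_cast; ring
    rw [this] at hhi; exact hhi
  have hBneg : B < 0 := by
    have : (B : ℝ) < 0 := by linarith
    exact_mod_cast this
  have hlor : -(Real.sqrt D) < (B : ℝ) := by exact_mod_cast hlo
  have hB2 : B ^ 2 < D := by
    have : (B : ℝ) ^ 2 < (D : ℝ) := by nlinarith
    exact_mod_cast this
  have hdvd : (4 * (A : ℤ)) ∣ B ^ 2 - D := by
    have h1 : (4 * (A : ℤ)) ∣ B ^ 2 - b ^ 2 := cong_sq hcong
    have : B ^ 2 - D = (B ^ 2 - b ^ 2) + (b ^ 2 - D) := by ring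
    rw [this]; exact dvd_add h1 hb
  set C : ℤ := (B ^ 2 - D) / (4 * A) with hCdef
  have hC4 : 4 * (A : ℤ) * C = B ^ 2 - D := Int.mul_ediv_cancel' hdvd
  have hCneg : C < 0 := by nlinarith [hC4, hB2, (by positivity : (0:ℤ) < 4 * (A:ℤ))]
  have habs : ((|B| : ℤ) : ℝ) = -(B : ℝ) := by rw [abs_of_neg hBneg]; push_cast; ring
  refine ⟨B, C, ⟨⟨by linarith [hC4], by exact_mod_cast hA1, hBneg, hCneg, ?_, ?_, ?_⟩,
    hprim A B C (by positivity) (by linarith [hC4])⟩, hcong⟩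
  · rw [habs]; push_cast; linarith
  · rw [habs]; push_cast; linarith
  · rw [habs]; push_cast; linarith

lemma sum_le_caliber (D : ℤ) (hD0 : 0 < D) (hirr : Irrational (Real.sqrt D))
    (hprim : ∀ A B C : ℤ, A ≠ 0 → D = B ^ 2 - 4 * A * C → IsPrimitiveForm A B C) :
    ∑ A ∈ (Finset.Icc 1 D.toNat).filter
      (fun A : ℕ => (A : ℝ) < Real.sqrt D / 2), rho D A ≤ caliber D := by
  classical
  set s := (Finset.Icc 1 D.toNat).filter (fun A : ℕ => (A : ℝ) < Real.sqrt D / 2) with hsdef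
  have hs1 : ∀ A ∈ s, 1 ≤ A := by
    intro A hA
    rw [hsdef, Finset.mem_filter, Finset.mem_Icc] at hA
    exact hA.1.1
  have hs2 : ∀ A ∈ s, (A : ℝ) < Real.sqrt D / 2 := by
    intro A hA
    rw [hsdef, Finset.mem_filter] at hA
    exact hA.2
  rw [sum_rho_eq D s hs1]
  haveI : Finite {f : ℤ × ℤ × ℤ //
      IsReducedForm D f.1 f.2.1 f.2.2 ∧ IsPrimitiveForm f.1 f.2.1 f.2.2} := finite_S D hD0
  have hex : ∀ p : (Σ a : {x // x ∈ s}, {B : ZMod (2 * a.1) //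
        ∃ b : ℤ, (b : ZMod (2 * a.1)) = B ∧ (4 * (a.1 : ℤ)) ∣ b ^ 2 - D}),
      ∃ f : ℤ × ℤ × ℤ,
        (IsReducedForm D f.1 f.2.1 f.2.2 ∧ IsPrimitiveForm f.1 f.2.1 f.2.2) ∧
        f.1 = (p.1.1 : ℤ) ∧ ((f.2.1 : ZMod (2 * p.1.1)) = p.2.1) := by
    rintro ⟨⟨A, hAs⟩, ⟨β, hβ⟩⟩
    obtain ⟨b, hbβ, hbd⟩ := hβ
    obtain ⟨B, C, hform, hcong⟩ :=
      build_form D hD0 hirr hprim A (hs1 A hAs) (hs2 A hAs) b hbd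
    refine ⟨((A : ℤ), B, C), hform, rfl, ?_⟩
    simp only
    subst hbβ; rw [ZMod.intCast_eq_intCast_iff]
    rw [Int.modEq_iff_dvd]
    have : b - B = -(B - b) := by ring
    rw [this]
    exact (Dvd.dvd.neg_right (by exact_mod_cast hcong))
  choose F hF using hex
  set Ψ : (Σ a : {x // x ∈ s}, {B : ZMod (2 * a.1) //
        ∃ b : ℤ, (b : ZMod (2 * a.1)) = B ∧ (4 * (a.1 : ℤ)) ∣ b ^ 2 - D}) →
      {f : ℤ × ℤ × ℤ // IsReducedForm D f.1 f.2.1 f.2.2 ∧ IsPrimitiveForm f.1 f.2.1 f.2.2} :=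
    fun p => ⟨F p, (hF p).1⟩ with hΨdef
  refine Nat.card_le_card_of_injective Ψ ?_
  intro p q h
  obtain ⟨a, β⟩ := p
  obtain ⟨a', β'⟩ := q
  have hFpq : F ⟨a, β⟩ = F ⟨a', β'⟩ := congrArg Subtype.val h
  have e1 : (a.1 : ℤ) = (a'.1 : ℤ) := by
    rw [← (hF ⟨a, β⟩).2.1, ← (hF ⟨a', β'⟩).2.1, hFpq]
  have e1' : a.1 = a'.1 := by exact_mod_cast e1
  have e0 : a = a' := Subtype.ext e1'
  subst e0
  have e2 : β.1 = β'.1 := by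
    rw [← (hF ⟨a, β⟩).2.2, ← (hF ⟨a, β'⟩).2.2, hFpq]
  rw [show β = β' from Subtype.ext e2]

end Lower

open scoped Classical in

theorem stmt1 (d : ℕ) (hd : Squarefree d) (h1 : 1 < d) :
    (∑ A ∈ (Finset.Icc 1 (disc d).toNat).filter
        (fun (A : ℕ) => (A : ℝ) < Real.sqrt (disc d) / 2), rho (disc d) A) ≤ caliber (disc d) ∧
    caliber (disc d) ≤
      ∑ A ∈ (Finset.Icc 1 (disc d).toNat).filter
        (fun (A : ℕ) => (A : ℝ) < Real.sqrt (disc d)), rho (disc d) A := by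
  have hD0 := disc_pos d h1
  have hirr := disc_irr d hd h1
  exact ⟨sum_le_caliber _ hD0 hirr (fun A B C hA hD => prim_of_disc d hd h1 A B C hA hD),
    caliber_le_sum _ hD0 hirr⟩
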